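/- Let A be a unital complex algebra with a Sylvester rank function rk, and let Q(x) be a linear matrix of size m over ℂ⟨x₁,…,x_d⟩, u a complex row vector and v a complex column vector. Let X, Y be d-tuples in A such that Q(X) and Q(Y) are invertible in Mₘ(A). Then rk(u Q(X)⁻¹ v − u Q(Y)⁻¹ v) ≤ m·(rk(X₁−Y₁) + … + rk(X_d−Y_d)). -/

import Mathlib

/-- A Sylvester rank function on a unital algebra `A`: a nonnegative real-valued
function on rectangular matrices over `A` satisfying `rk 0 = 0`, `rk 1 = 1`,
`rk (A*B) ≤ min (rk A) (rk B)`, additivity on block-diagonal matrices and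
superadditivity on block upper-triangular matrices. -/
structure SylvesterRank (A : Type*) [Ring A] where
  rk : ∀ {m n : ℕ}, Matrix (Fin m) (Fin n) A → ℝ
  rk_nonneg : ∀ {m n : ℕ} (M : Matrix (Fin m) (Fin n) A), 0 ≤ rk M
  rk_zero : ∀ {m n : ℕ}, rk (0 : Matrix (Fin m) (Fin n) A) = 0
  rk_one : rk (1 : Matrix (Fin 1) (Fin 1) A) = 1
  rk_mul_le_left : ∀ {m n p : ℕ} (M : Matrix (Fin m) (Fin n) A)
    (N : Matrix (Fin n) (Fin p) A), rk (M * N) ≤ rk M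
  rk_mul_le_right : ∀ {m n p : ℕ} (M : Matrix (Fin m) (Fin n) A)
    (N : Matrix (Fin n) (Fin p) A), rk (M * N) ≤ rk N
  rk_blockDiag : ∀ {m n p q : ℕ} (M : Matrix (Fin m) (Fin n) A)
    (N : Matrix (Fin p) (Fin q) A),
    rk ((Matrix.fromBlocks M 0 0 N).submatrix finSumFinEquiv.symm finSumFinEquiv.symm)
      = rk M + rk N
  rk_blockTriangle : ∀ {m n p q : ℕ} (M : Matrix (Fin m) (Fin n) A)
    (C : Matrix (Fin m) (Fin q) A) (N : Matrix (Fin p) (Fin q) A),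
    rk M + rk N ≤
      rk ((Matrix.fromBlocks M C 0 N).submatrix finSumFinEquiv.symm finSumFinEquiv.symm)

/-- The rank of a single element of `A`, viewed as a `1 × 1` matrix. -/
noncomputable def SylvesterRank.rkElem {A : Type*} [Ring A] (S : SylvesterRank A)
    (x : A) : ℝ :=
  S.rk !![x]

namespace SylvesterRank
variable {A : Type*} [Ring A] (S : SylvesterRank A)

lemma rk_neg_le {m n : ℕ} (M : Matrix (Fin m) (Fin n) A) : S.rk (-M) ≤ S.rk M := by
  have h := S.rk_mul_le_right (-1 : Matrix (Fin m) (Fin m) A) M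
  simpa [neg_one_mul] using h

lemma rk_add_le {m n : ℕ} (M N : Matrix (Fin m) (Fin n) A) :
    S.rk (M + N) ≤ S.rk M + S.rk N := by
  classical
  have key : M + N =
      ((Matrix.fromCols (1 : Matrix (Fin m) (Fin m) A) 1).submatrix id
        (finSumFinEquiv (m := m) (n := m)).symm) *
      ((Matrix.fromBlocks M 0 0 N).submatrix (finSumFinEquiv (m := m) (n := m)).symm
        (finSumFinEquiv (m := n) (n := n)).symm) *
      ((Matrix.fromRows (1 : Matrix (Fin n) (Fin n) A) 1).submatrix
        (finSumFinEquiv (m := n) (n := n)).symm id) := by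
    rw [Matrix.submatrix_mul_equiv, Matrix.submatrix_mul_equiv]
    simp [Matrix.fromCols_mul_fromBlocks, Matrix.fromCols_mul_fromRows]
  calc S.rk (M + N) ≤ S.rk ((Matrix.fromBlocks M 0 0 N).submatrix
        (finSumFinEquiv (m := m) (n := m)).symm (finSumFinEquiv (m := n) (n := n)).symm) := by
        rw [key]
        exact (S.rk_mul_le_left _ _).trans (S.rk_mul_le_right _ _)
    _ = S.rk M + S.rk N := S.rk_blockDiag M N


lemma rk_sum_le {m n : ℕ} {ι : Type*} (s : Finset ι) (f : ι → Matrix (Fin m) (Fin n) A) :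
    S.rk (∑ i ∈ s, f i) ≤ ∑ i ∈ s, S.rk (f i) := by
  classical
  induction s using Finset.induction_on with
  | empty => simp [S.rk_zero]
  | insert _ _ h ih =>
      rw [Finset.sum_insert h, Finset.sum_insert h]
      exact (S.rk_add_le _ _).trans (by gcongr)

lemma rk_scalar_le (z : A) : ∀ m : ℕ,
    S.rk (Matrix.diagonal (fun _ : Fin m => z)) ≤ m * S.rk !![z]
  | 0 => by
      have h : (Matrix.diagonal (fun _ : Fin 0 => z)) = 0 := by
        ext i; exact i.elim0
      simp [h, S.rk_zero]
  | (m + 1) => by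
      have h1 : !![z] = Matrix.diagonal (fun _ : Fin 1 => z) := by
        ext i j; fin_cases i; fin_cases j; simp
      have h := S.rk_blockDiag (Matrix.diagonal (fun _ : Fin m => z))
        (Matrix.diagonal (fun _ : Fin 1 => z))
      rw [Matrix.fromBlocks_diagonal, Matrix.submatrix_diagonal_equiv] at h
      have h2 : (Sum.elim (fun _ : Fin m => z) (fun _ : Fin 1 => z)) ∘
          (finSumFinEquiv (m := m) (n := 1)).symm = fun _ : Fin (m + 1) => z := by
        funext i
        rcases hh : (finSumFinEquiv (m := m) (n := 1)).symm i with a | a <;>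
          simp [Function.comp, hh]
      rw [h2] at h
      rw [h1, h]
      have ih := rk_scalar_le z m
      rw [h1] at ih
      push_cast
      nlinarith [S.rk_nonneg (Matrix.diagonal (fun _ : Fin 1 => z))]

end SylvesterRank
/-- Evaluation of the linear matrix `Q₀ ⊗ 1 + Σᵢ Qᵢ ⊗ xᵢ` (with `Q₀,…,Q_d ∈ Mₘ(ℂ)`)
at a tuple `X` over a unital complex algebra `A`. -/
noncomputable def linMatEval {A : Type*} [Ring A] [Algebra ℂ A] {m d : ℕ}
    (Q0 : Matrix (Fin m) (Fin m) ℂ) (Qc : Fin d → Matrix (Fin m) (Fin m) ℂ)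
    (X : Fin d → A) : Matrix (Fin m) (Fin m) A :=
  Q0.map (algebraMap ℂ A) + ∑ i, Matrix.of fun r c => Qc i r c • X i
lemma rk_of_smul_le {A : Type*} [Ring A] [Algebra ℂ A] (S : SylvesterRank A) {m : ℕ}
    (Q : Matrix (Fin m) (Fin m) ℂ) (z : A) :
    S.rk (Matrix.of fun r c => Q r c • z) ≤ m * S.rkElem z := by
  have key : (Matrix.of fun r c => Q r c • z) =
      Q.map (algebraMap ℂ A) * Matrix.diagonal (fun _ : Fin m => z) := by
    ext r c
    simp [Matrix.mul_diagonal, Algebra.smul_def]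
  rw [key]
  exact (S.rk_mul_le_right _ _).trans (S.rk_scalar_le z m)

/-- For a linear matrix `Q(x)` of size `m` over `ℂ⟨x₁,…,x_d⟩`, a complex row `u` and
column `v`, and tuples `X`, `Y` over a unital complex algebra `A` with a Sylvester
rank function `rk` such that `Q(X)` and `Q(Y)` are invertible (with two-sided
inverses `QXi`, `QYi`), one has
`rk (u Q(X)⁻¹ v − u Q(Y)⁻¹ v) ≤ m · (rk (X₁ − Y₁) + ⋯ + rk (X_d − Y_d))`. -/
theorem sylvesterRank_resolvent_diff {A : Type*} [Ring A] [Algebra ℂ A]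
    (S : SylvesterRank A) {m d : ℕ}
    (Q0 : Matrix (Fin m) (Fin m) ℂ) (Qc : Fin d → Matrix (Fin m) (Fin m) ℂ)
    (u : Matrix (Fin 1) (Fin m) ℂ) (v : Matrix (Fin m) (Fin 1) ℂ)
    (X Y : Fin d → A) (QXi QYi : Matrix (Fin m) (Fin m) A)
    (hX1 : linMatEval Q0 Qc X * QXi = 1) (hX2 : QXi * linMatEval Q0 Qc X = 1)
    (hY1 : linMatEval Q0 Qc Y * QYi = 1) (hY2 : QYi * linMatEval Q0 Qc Y = 1) :
    S.rk (u.map (algebraMap ℂ A) * QXi * v.map (algebraMap ℂ A)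
        - u.map (algebraMap ℂ A) * QYi * v.map (algebraMap ℂ A))
      ≤ m * ∑ i, S.rkElem (X i - Y i) := by
  classical
  set u' := u.map (algebraMap ℂ A)
  set v' := v.map (algebraMap ℂ A)
  set QX := linMatEval Q0 Qc X
  set QY := linMatEval Q0 Qc Y
  set D := QY - QX with hDdef
  have key : QXi - QYi = QYi * D * QXi := by
    rw [hDdef, mul_sub, sub_mul, mul_assoc QYi QX QXi, hX1, hY2, one_mul, mul_one]
  have hdiff : u' * QXi * v' - u' * QYi * v' = (u' * QYi) * (D * (QXi * v')) := by
    have : u' * QXi * v' - u' * QYi * v' = u' * (QXi - QYi) * v' := by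
      rw [Matrix.mul_sub, Matrix.sub_mul]
    rw [this, key]
    simp only [Matrix.mul_assoc]
  rw [hdiff]
  have step1 : S.rk ((u' * QYi) * (D * (QXi * v'))) ≤ S.rk D :=
    (S.rk_mul_le_right _ _).trans (S.rk_mul_le_left _ _)
  refine step1.trans ?_
  have hD : D = ∑ i, Matrix.of (fun r c => Qc i r c • (Y i - X i)) := by
    have hterm : ∀ i : Fin d, (Matrix.of fun r c => Qc i r c • Y i)
        - (Matrix.of fun r c => Qc i r c • X i)
        = Matrix.of fun r c => Qc i r c • (Y i - X i) := by
      intro i; ext r c; simp [smul_sub]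
    simp only [hDdef, QX, QY, linMatEval, add_sub_add_left_eq_sub,
      ← Finset.sum_sub_distrib, hterm]
  rw [hD]
  refine (S.rk_sum_le _ _).trans ?_
  rw [Finset.mul_sum]
  refine Finset.sum_le_sum fun i _ => ?_
  refine (rk_of_smul_le S (Qc i) (Y i - X i)).trans ?_
  have hneg : !![Y i - X i] = -(!![X i - Y i]) := by
    ext r c; fin_cases r; fin_cases c; simp [neg_sub]
  have : S.rkElem (Y i - X i) ≤ S.rkElem (X i - Y i) := by
    unfold SylvesterRank.rkElem
    rw [hneg]
    exact S.rk_neg_le _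
  have hm : (0 : ℝ) ≤ m := by positivity
  nlinarith
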